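/- Let ω ∈ (0,∞], m ∈ ℕ, φ ∈ Φ, and let e_r : [0,ω) → ℝ^m be continuously differentiable with φ(t)‖e_r(t)‖ < 1 for all t ∈ [0,ω) and φ(0)‖e_r(0)‖ < 1. Let γ, k_r, C > 0 and define k(t) := k_r / (1 − φ(t)² ‖e_r(t)‖²). If for all t ∈ [0,ω): (1/2) d/dt ‖e_r(t)‖² ≤ ( C − k(t) γ ‖e_r(t)‖ ) ‖e_r(t)‖, then there exists ε_r ∈ (0,1) such that φ(t)‖e_r(t)‖ ≤ ε_r for all t ∈ [0,ω); consequently the gain k is bounded on [0,ω). -/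

import Mathlib

open Set Filter

noncomputable section

/-- Euclidean space `ℝ^m`. -/
abbrev Euc (m : ℕ) := EuclideanSpace ℝ (Fin m)

/-- Membership in the funnel class `Φ` (with explicit derivative `φ'`). -/
def FunnelFun (φ φ' : ℝ → ℝ) : Prop :=
  (∀ t ∈ Ici (0 : ℝ), HasDerivWithinAt φ (φ' t) (Ici 0) t) ∧
  ContinuousOn φ' (Ici 0) ∧
  (∃ M, ∀ t ∈ Ici (0 : ℝ), |φ t| ≤ M) ∧
  (∃ M, ∀ t ∈ Ici (0 : ℝ), |φ' t| ≤ M) ∧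
  (∀ t : ℝ, 0 < t → 0 < φ t) ∧
  0 < Filter.liminf φ Filter.atTop

open scoped RealInnerProductSpace Topology

set_option maxHeartbeats 1000000 in
/-- **Gain boundedness: the error stays uniformly away from the funnel boundary.**
If `φ(t)‖e_r(t)‖ < 1` on `[0,ω)` and `(1/2) d/dt ‖e_r‖² ≤ (C − k(t) γ ‖e_r‖)‖e_r‖` with
`k(t) = k_r/(1 − φ(t)²‖e_r(t)‖²)`, then `φ‖e_r‖ ≤ ε_r` for some `ε_r ∈ (0,1)` and the gain
`k` is bounded on `[0,ω)`. -/
theorem stmt_13 (m : ℕ) (ω : EReal) (hω : 0 < ω)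
    (D : Set ℝ) (hD : D = {t : ℝ | 0 ≤ t ∧ (t : EReal) < ω})
    (φ φ' : ℝ → ℝ) (hΦ : FunnelFun φ φ')
    (er er' : ℝ → Euc m)
    (hder : ∀ t ∈ D, HasDerivWithinAt er (er' t) D t)
    (hcont : ContinuousOn er' D)
    (hfunnel : ∀ t ∈ D, φ t * ‖er t‖ < 1)
    (h0 : φ 0 * ‖er 0‖ < 1)
    (γ kr Cb : ℝ) (hγ : 0 < γ) (hkr : 0 < kr) (hCb : 0 < Cb)
    (hineq : ∀ t ∈ D,
      (1 / 2) * derivWithin (fun s => ‖er s‖ ^ 2) D t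
        ≤ (Cb - (kr / (1 - (φ t) ^ 2 * ‖er t‖ ^ 2)) * γ * ‖er t‖) * ‖er t‖) :
    (∃ ε : ℝ, ε ∈ Set.Ioo (0 : ℝ) 1 ∧ ∀ t ∈ D, φ t * ‖er t‖ ≤ ε) ∧
    (∃ K : ℝ, ∀ t ∈ D, kr / (1 - (φ t) ^ 2 * ‖er t‖ ^ 2) ≤ K) := by
  obtain ⟨hφd, hφ'c, ⟨M, hM⟩, ⟨M', hM'⟩, hφpos, hliminf⟩ := hΦ
  have hM0 : 0 ≤ M := le_trans (abs_nonneg _) (hM 0 self_mem_Ici)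
  have hM'0 : 0 ≤ M' := le_trans (abs_nonneg _) (hM' 0 self_mem_Ici)
  -- basic facts about D
  have h0D : (0:ℝ) ∈ D := by rw [hD]; exact ⟨le_rfl, hω⟩
  have hDsub : D ⊆ Ici (0:ℝ) := by rw [hD]; intro t ht; exact ht.1
  have hIccD : ∀ t ∈ D, Icc (0:ℝ) t ⊆ D := by
    rw [hD]; rintro t ⟨_, htω⟩ s ⟨hs0, hst⟩
    exact ⟨hs0, lt_of_le_of_lt (EReal.coe_le_coe_iff.mpr hst) htω⟩
  obtain ⟨δ, hδpos, hδD⟩ : ∃ δ, 0 < δ ∧ Icc (0:ℝ) δ ⊆ D := by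
    induction ω using EReal.rec with
    | bot => exact absurd hω (by simp)
    | coe w =>
        have hw : (0:ℝ) < w := by exact_mod_cast hω
        refine ⟨w/2, by linarith, ?_⟩
        rw [hD]; rintro t ⟨ht0, htδ⟩
        exact ⟨ht0, by exact_mod_cast lt_of_le_of_lt htδ (by linarith)⟩
    | top =>
        refine ⟨1, one_pos, ?_⟩
        rw [hD]; rintro t ⟨ht0, _⟩
        exact ⟨ht0, by simp⟩
  -- continuity
  have hφcont : ContinuousOn φ (Ici 0) := fun t ht => (hφd t ht).continuousWithinAt
  have herc : ContinuousOn er D := fun t ht => (hder t ht).continuousWithinAt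
  -- φ is nonnegative at 0
  have hφ0 : 0 ≤ φ 0 := by
    have hc : ContinuousWithinAt φ (Ici 0) 0 := (hφd 0 self_mem_Ici).continuousWithinAt
    have ht : Tendsto φ (𝓝[>] (0:ℝ)) (𝓝 (φ 0)) :=
      hc.tendsto.mono_left (nhdsWithin_mono _ Ioi_subset_Ici_self)
    exact ge_of_tendsto ht (eventually_nhdsWithin_of_forall fun x hx => (hφpos x hx).le)
  have hφnn : ∀ t : ℝ, 0 ≤ t → 0 ≤ φ t := fun t ht =>
    ht.lt_or_eq.elim (fun h => (hφpos t h).le) (fun h => h ▸ hφ0)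
  -- positive lower bound for φ on [δ, ∞)
  obtain ⟨c, hcpos, hc⟩ : ∃ c, 0 < c ∧ ∀ t, δ ≤ t → c ≤ φ t := by
    set l := liminf φ atTop with hl
    have hbdd : IsBoundedUnder (· ≥ ·) atTop φ := by
      refine ⟨-M, eventually_map.mpr ?_⟩
      filter_upwards [eventually_ge_atTop (0:ℝ)] with t ht
      have := (abs_le.mp (hM t ht)).1
      linarith
    have hev : ∀ᶠ t in atTop, l/2 < φ t :=
      eventually_lt_of_lt_liminf (by linarith [hliminf]) hbdd
    obtain ⟨T, hT⟩ := eventually_atTop.mp hev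
    set T' := max δ T with hT'
    obtain ⟨t0, ht0mem, ht0min⟩ :=
      isCompact_Icc.exists_isMinOn (Set.nonempty_Icc.mpr (le_max_left δ T))
        (hφcont.mono (fun x hx => le_trans hδpos.le hx.1))
    refine ⟨min (φ t0) (l/2), lt_min (hφpos t0 (lt_of_lt_of_le hδpos ht0mem.1)) (by linarith [hliminf]), ?_⟩
    intro t htδ
    rcases le_or_gt t T' with h | h
    · exact le_trans (min_le_left _ _) (ht0min ⟨htδ, h⟩)
    · exact le_trans (min_le_right _ _) (hT t (le_trans (le_max_right δ T) h.le)).le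
  -- uniform bound for ‖er‖ on D
  obtain ⟨B₁, hB₁⟩ : ∃ B₁, ∀ t ∈ Icc (0:ℝ) δ, ‖er t‖ ≤ B₁ :=
    isCompact_Icc.exists_bound_of_continuousOn (herc.mono hδD)
  set B := max B₁ (1/c) with hBdef
  have hB : ∀ t ∈ D, ‖er t‖ ≤ B := by
    intro t ht
    rcases le_or_gt t δ with h | h
    · exact le_trans (hB₁ t ⟨hDsub ht, h⟩) (le_max_left _ _)
    · have hct : c ≤ φ t := hc t h.le
      have h1 : c * ‖er t‖ ≤ 1 :=
        le_trans (mul_le_mul_of_nonneg_right hct (norm_nonneg _)) (hfunnel t ht).le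
      have : ‖er t‖ ≤ 1/c := by
        rw [le_div_iff₀ hcpos]; linarith [h1]
      exact le_trans this (le_max_right _ _)
  have hB0 : 0 ≤ B := le_trans (norm_nonneg (er 0)) (hB 0 h0D)
  -- choice of ε
  set A := M' * B + Cb * M + 1 with hAdef
  have hA : 0 < A := by
    have := mul_nonneg hM'0 hB0
    have := mul_nonneg hCb.le hM0
    linarith
  set δ0 := min (γ * kr / (4 * A)) (1/2) with hδ0def
  have hδ0pos : 0 < δ0 := lt_min (by positivity) (by norm_num)
  have hδ0half : δ0 ≤ 1/2 := min_le_right _ _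
  have hδ0le : δ0 ≤ γ * kr / (4 * A) := min_le_left _ _
  set ε := max (φ 0 * ‖er 0‖) (Real.sqrt (1 - δ0)) with hεdef
  have hε1 : ε < 1 := by
    refine max_lt h0 ?_
    have : Real.sqrt (1 - δ0) < Real.sqrt 1 := Real.sqrt_lt_sqrt (by linarith) (by linarith)
    simpa using this
  have hεpos : 0 < ε :=
    lt_of_lt_of_le (Real.sqrt_pos.mpr (by linarith)) (le_max_right _ _)
  have hεsq : 1 - δ0 ≤ ε^2 := by
    have h1 : Real.sqrt (1 - δ0) ^ 2 ≤ ε ^ 2 :=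
      pow_le_pow_left₀ (Real.sqrt_nonneg _) (le_max_right _ _) 2
    rwa [Real.sq_sqrt (by linarith : (0:ℝ) ≤ 1 - δ0)] at h1
  have hεsq_half : 1/2 ≤ ε^2 := by linarith
  have hεsq1 : ε^2 < 1 := by nlinarith
  have hkey : 2 * A * (1 - ε^2) ≤ γ * kr * ε^2 := by
    have h1 : 1 - ε^2 ≤ γ * kr / (4 * A) := le_trans (by linarith) hδ0le
    have h2 : (1 - ε^2) * (4 * A) ≤ γ * kr := (le_div_iff₀ (by positivity)).mp h1
    nlinarith [mul_nonneg (mul_pos hγ hkr).le (by linarith : (0:ℝ) ≤ ε^2 - 1/2)]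
  -- the squared funnel function
  set ψ : ℝ → ℝ := fun t => (φ t)^2 * ‖er t‖^2 with hψdef
  have hψcont : ContinuousOn ψ D :=
    ((hφcont.mono hDsub).pow 2).mul (herc.norm.pow 2)
  -- main claim
  have hmain : ∀ t ∈ D, (φ t)^2 * ‖er t‖^2 ≤ ε^2 := by
    by_contra hcon
    push_neg at hcon
    obtain ⟨t₁, ht₁D, ht₁⟩ := hcon
    have ht₁0 : (0:ℝ) ≤ t₁ := hDsub ht₁D
    have hIcc₁D : Icc (0:ℝ) t₁ ⊆ D := hIccD t₁ ht₁D
    have hψ0 : ψ 0 ≤ ε^2 := by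
      have h00 : φ 0 * ‖er 0‖ ≤ ε := le_max_left _ _
      have h01 : (φ 0 * ‖er 0‖)^2 ≤ ε^2 :=
        pow_le_pow_left₀ (mul_nonneg hφ0 (norm_nonneg _)) h00 2
      calc ψ 0 = (φ 0 * ‖er 0‖)^2 := by rw [hψdef]; ring
      _ ≤ ε^2 := h01
    set S := {t ∈ Icc (0:ℝ) t₁ | ψ t ≤ ε^2} with hSdef
    have hSne : S.Nonempty := ⟨0, ⟨le_rfl, ht₁0⟩, hψ0⟩
    have hSbdd : BddAbove S := ⟨t₁, fun x hx => hx.1.2⟩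
    have hScl : IsClosed S := by
      have h1 : ContinuousOn ψ (Icc 0 t₁) := hψcont.mono hIcc₁D
      have : S = Icc (0:ℝ) t₁ ∩ ψ ⁻¹' (Iic (ε^2)) := by
        ext x; simp [hSdef, Set.mem_sep_iff, and_comm]
      rw [this]
      exact h1.preimage_isClosed_of_isClosed isClosed_Icc isClosed_Iic
    set s := sSup S with hsdef
    have hsS : s ∈ S := hScl.csSup_mem hSne hSbdd
    have hs0 : 0 ≤ s := hsS.1.1
    have hst₁ : s ≤ t₁ := hsS.1.2
    have hslt : s < t₁ := hst₁.lt_of_ne fun h => absurd (h ▸ hsS.2) (not_le.mpr ht₁)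
    have hgt : ∀ u ∈ Ioc s t₁, ε^2 < ψ u := by
      intro u hu
      by_contra hle
      push_neg at hle
      exact absurd (le_csSup hSbdd ⟨⟨hs0.trans hu.1.le, hu.2⟩, hle⟩) (not_le.mpr hu.1)
    -- derivative facts on the interior
    have hderiv : ∀ x ∈ Ioo s t₁,
        HasDerivAt ψ (2 * φ x * φ' x * ‖er x‖^2 + (φ x)^2 * (2 * ⟪er' x, er x⟫)) x ∧
        2 * φ x * φ' x * ‖er x‖^2 + (φ x)^2 * (2 * ⟪er' x, er x⟫) ≤ 0 := by
      intro x hx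
      have hx0 : 0 < x := lt_of_le_of_lt hs0 hx.1
      have hxD : x ∈ D := hIcc₁D ⟨hx0.le, hx.2.le⟩
      have hDnx : D ∈ 𝓝 x :=
        mem_nhds_iff.mpr ⟨Ioo 0 t₁, fun y hy => hIcc₁D ⟨hy.1.le, hy.2.le⟩, isOpen_Ioo, hx0, hx.2⟩
      have hφx : HasDerivAt φ (φ' x) x := (hφd x hx0.le).hasDerivAt (Ici_mem_nhds hx0)
      have herx : HasDerivAt er (er' x) x := (hder x hxD).hasDerivAt hDnx
      have hNx : HasDerivAt (fun t => ‖er t‖^2) (2 * ⟪er' x, er x⟫) x := by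
        have h := HasDerivAt.inner ℝ herx herx
        simp only [real_inner_self_eq_norm_sq] at h
        refine h.congr_deriv ?_
        rw [real_inner_comm (er x) (er' x)]; ring
      have hψx : HasDerivAt ψ
          (2 * φ x * φ' x * ‖er x‖^2 + (φ x)^2 * (2 * ⟪er' x, er x⟫)) x := by
        have h := (hφx.pow 2).mul hNx
        refine h.congr_deriv ?_
        rw [Pi.pow_apply]; ring
      refine ⟨hψx, ?_⟩
      -- the inequality from the assumption
      have hdw : derivWithin (fun s => ‖er s‖^2) D x = 2 * ⟪er' x, er x⟫ :=
        (hNx.hasDerivWithinAt).derivWithin (uniqueDiffWithinAt_of_mem_nhds hDnx)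
      have hiq := hineq x hxD
      rw [hdw] at hiq
      set a := φ x with ha
      set p := φ' x with hp
      set n := ‖er x‖ with hn
      have hinner : ⟪er' x, er x⟫ ≤ (Cb - kr / (1 - a^2 * n^2) * γ * n) * n := by linarith
      have hapos : 0 < a := hφpos x hx0
      have hn0 : 0 ≤ n := norm_nonneg _
      have hnB : n ≤ B := hB x hxD
      have han : a * n < 1 := hfunnel x hxD
      have hann : 0 ≤ a * n := mul_nonneg hapos.le hn0
      have haM : a ≤ M := le_trans (le_abs_self _) (hM x hx0.le)
      have hpM : |p| ≤ M' := hM' x hx0.le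
      have hψge : ε^2 ≤ a^2 * n^2 := (hgt x ⟨hx.1, hx.2.le⟩).le
      have hd : 0 < 1 - a^2 * n^2 := by nlinarith
      have hdle : 1 - a^2 * n^2 ≤ 1 - ε^2 := by linarith
      set d := 1 - a^2 * n^2 with hddef
      -- bound the drift terms
      have h1 : a * p * n^2 ≤ M' * B := by
        calc a * p * n^2 = p * ((a*n) * n) := by ring
        _ ≤ |p| * ((a*n) * n) :=
            mul_le_mul_of_nonneg_right (le_abs_self p) (mul_nonneg hann hn0)
        _ ≤ M' * ((a*n) * n) := mul_le_mul_of_nonneg_right hpM (mul_nonneg hann hn0)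
        _ ≤ M' * (1 * B) :=
            mul_le_mul_of_nonneg_left (mul_le_mul han.le hnB hn0 one_pos.le) hM'0
        _ = M' * B := by ring
      have h2 : a^2 * Cb * n ≤ Cb * M := by
        calc a^2 * Cb * n = Cb * (a * (a*n)) := by ring
        _ ≤ Cb * (M * 1) :=
            mul_le_mul_of_nonneg_left (mul_le_mul haM han.le hann hM0) hCb.le
        _ = Cb * M := by ring
      -- bound the stabilizing term from below
      have h3 : 2 * A ≤ kr / d * γ * (a^2 * n^2) := by
        have h3a : kr / (1 - ε^2) ≤ kr / d :=
          div_le_div_of_nonneg_left hkr.le hd hdle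
        have h3b : 2 * A ≤ kr / (1 - ε^2) * γ * ε^2 := by
          have hpos : (0:ℝ) < 1 - ε^2 := by linarith
          have : 2 * A ≤ γ * kr * ε^2 / (1 - ε^2) :=
            (le_div_iff₀ hpos).mpr (by linarith [hkey])
          calc 2 * A ≤ γ * kr * ε^2 / (1 - ε^2) := this
          _ = kr / (1 - ε^2) * γ * ε^2 := by ring
        have hq : 0 ≤ kr / (1 - ε^2) * γ :=
          mul_nonneg (div_nonneg hkr.le (by linarith)) hγ.le
        have hq2 : kr / (1 - ε^2) * γ ≤ kr / d * γ :=
          mul_le_mul_of_nonneg_right h3a hγ.le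
        have h3c : kr / (1 - ε^2) * γ * ε^2 ≤ kr / d * γ * (a^2 * n^2) :=
          mul_le_mul hq2 hψge (sq_nonneg ε) (mul_nonneg (div_nonneg hkr.le hd.le) hγ.le)
        linarith
      have h4 : a^2 * (2 * ⟪er' x, er x⟫) ≤ 2 * (a^2 * ((Cb - kr / d * γ * n) * n)) := by
        have := mul_le_mul_of_nonneg_left hinner (sq_nonneg a)
        linarith
      have hexp : a^2 * ((Cb - kr / d * γ * n) * n)
          = a^2 * Cb * n - kr / d * γ * (a^2 * n^2) := by ring
      linarith [h1, h2, h3, h4, hexp, hA, hAdef]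
    -- antitone on [s, t₁]
    have hanti : AntitoneOn ψ (Icc s t₁) := by
      apply antitoneOn_of_deriv_nonpos (convex_Icc s t₁)
      · exact hψcont.mono (fun x hx => hIcc₁D ⟨hs0.trans hx.1, hx.2⟩)
      · rw [interior_Icc]
        intro x hx
        exact ((hderiv x hx).1.differentiableAt).differentiableWithinAt
      · rw [interior_Icc]
        intro x hx
        rw [(hderiv x hx).1.deriv]
        exact (hderiv x hx).2
    have hfin : ψ t₁ ≤ ψ s :=
      hanti ⟨le_rfl, hst₁⟩ ⟨hst₁, le_rfl⟩ hst₁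
    exact absurd (hfin.trans hsS.2) (not_le.mpr ht₁)
  -- conclusions
  constructor
  · refine ⟨ε, ⟨hεpos, hε1⟩, fun t ht => ?_⟩
    have h := hmain t ht
    have hφt : 0 ≤ φ t := hφnn t (hDsub ht)
    nlinarith [norm_nonneg (er t), mul_nonneg hφt (norm_nonneg (er t)), hεpos]
  · refine ⟨kr / (1 - ε^2), fun t ht => ?_⟩
    have h1 : 1 - ε^2 ≤ 1 - (φ t)^2 * ‖er t‖^2 := by linarith [hmain t ht]
    have h2 : (0:ℝ) < 1 - ε^2 := by linarith
    exact div_le_div_of_nonneg_left hkr.le h2 h1
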